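/- Let n ≥ 5 and let λ be the Lie multiplication r₂⊕𝔞ₙ₋₂ on ℂⁿ. Then Der(λ) has dimension n² − 3n + 4, there exists an abelian ideal of λ of dimension n − 1, and every abelian ideal of λ has dimension at most n − 1. -/

import Mathlib

noncomputable section

abbrev V (n : ℕ) : Type := Fin n → ℂ

abbrev Bil (n : ℕ) : Type := V n →ₗ[ℂ] V n →ₗ[ℂ] V n

instance BilTop (n : ℕ) : TopologicalSpace (Bil n) :=
  TopologicalSpace.induced (fun μ : Bil n => fun x y : V n => μ x y) inferInstance

/-- The change-of-basis action of a linear automorphism on multiplications. -/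
def act {n : ℕ} (g : V n ≃ₗ[ℂ] V n) (μ : Bil n) : Bil n :=
  LinearMap.mk₂ ℂ (fun x y => g (μ (g.symm x) (g.symm y)))
    (fun x x' y => by simp)
    (fun c x y => by simp)
    (fun x y y' => by simp)
    (fun c x y => by simp)

/-- The orbit of a multiplication under the change-of-basis action. -/
def orb {n : ℕ} (μ : Bil n) : Set (Bil n) :=
  Set.range fun g : V n ≃ₗ[ℂ] V n => act g μ

/-- Two multiplications are isomorphic iff they lie in the same orbit. -/
def Isom {n : ℕ} (μ ν : Bil n) : Prop := ∃ g : V n ≃ₗ[ℂ] V n, act g μ = ν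

def levelOne {n : ℕ} (lam : Bil n) : Prop :=
  lam ≠ 0 ∧ closure (orb lam) ⊆ orb lam ∪ {0}

def levelTwo {n : ℕ} (lam : Bil n) : Prop :=
  (∀ μ ∈ closure (orb lam) \ orb lam, closure (orb μ) ⊆ orb μ ∪ {0}) ∧
  ∃ μ ∈ closure (orb lam) \ orb lam, μ ≠ 0

/-- `E n k` is the standard basis vector `e_{k+1}` of `ℂⁿ` (0-indexed `k`). -/
def E (n k : ℕ) : V n := fun m => if (m : ℕ) = k then 1 else 0

/-- The bilinear multiplication determined by a table of products of basis vectors. -/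
def ofTable {n : ℕ} (c : Fin n → Fin n → V n) : Bil n :=
  LinearMap.mk₂ ℂ (fun x y => ∑ i : Fin n, ∑ j : Fin n, (x i * y j) • c i j)
    (fun x x' y => by
      simp [add_mul, add_smul, Finset.sum_add_distrib])
    (fun a x y => by
      simp [Finset.smul_sum, smul_smul, mul_assoc])
    (fun x y y' => by
      simp [mul_add, add_smul, Finset.sum_add_distrib])
    (fun a x y => by
      simp [Finset.smul_sum, smul_smul, mul_assoc, mul_left_comm])

def JordanMul {n : ℕ} (lam : Bil n) : Prop :=
  (∀ x y : V n, lam x y = lam y x) ∧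
  ∀ x y : V n, lam (lam x x) (lam y x) = lam (lam (lam x x) y) x

def LieMul {n : ℕ} (lam : Bil n) : Prop :=
  (∀ x : V n, lam x x = 0) ∧
  ∀ x y z : V n, lam x (lam y z) + lam y (lam z x) + lam z (lam x y) = 0

def AssocMul {n : ℕ} (lam : Bil n) : Prop :=
  ∀ x y z : V n, lam (lam x y) z = lam x (lam y z)
/-- The space of derivations of a multiplication. -/
def Der {n : ℕ} (lam : Bil n) : Submodule ℂ (Module.End ℂ (V n)) where
  carrier := { D | ∀ x y : V n, D (lam x y) = lam (D x) y + lam x (D y) }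
  add_mem' := by
    intro a b ha hb x y
    simp only [LinearMap.add_apply, ha x y, hb x y, map_add, LinearMap.add_apply]
    abel
  zero_mem' := by intro x y; simp
  smul_mem' := by
    intro c a ha x y
    simp only [LinearMap.smul_apply, ha x y, map_smul, smul_add, LinearMap.smul_apply]

/-- `I` is an abelian ideal of the (Lie) multiplication `lam`. -/
def IsAbelianIdeal {n : ℕ} (lam : Bil n) (I : Submodule ℂ (V n)) : Prop :=
  (∀ x : V n, ∀ v ∈ I, lam x v ∈ I) ∧ ∀ v ∈ I, ∀ w ∈ I, lam v w = 0
/-- `n₅,₁ ⊕ 𝔞_{n-5}`: `[e₁,e₃] = e₅`, `[e₂,e₄] = e₅`. -/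
def n51 (n : ℕ) : Bil n :=
  ofTable fun i j =>
    if i.val = 0 ∧ j.val = 2 then E n 4
    else if i.val = 2 ∧ j.val = 0 then -E n 4
    else if i.val = 1 ∧ j.val = 3 then E n 4
    else if i.val = 3 ∧ j.val = 1 then -E n 4
    else 0

/-- `n₅,₂ ⊕ 𝔞_{n-5}`: `[e₁,e₂] = e₄`, `[e₁,e₃] = e₅`. -/
def n52 (n : ℕ) : Bil n :=
  ofTable fun i j =>
    if i.val = 0 ∧ j.val = 1 then E n 3
    else if i.val = 1 ∧ j.val = 0 then -E n 3
    else if i.val = 0 ∧ j.val = 2 then E n 4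
    else if i.val = 2 ∧ j.val = 0 then -E n 4
    else 0

/-- `r₂ ⊕ 𝔞_{n-2}`: `[e₁,e₂] = e₂`. -/
def r2 (n : ℕ) : Bil n :=
  ofTable fun i j =>
    if i.val = 0 ∧ j.val = 1 then E n 1
    else if i.val = 1 ∧ j.val = 0 then -E n 1
    else 0

/-- `g_{n,1}(α)`: `[e₁,e₂] = α e₂`, `[e₁,eᵢ] = eᵢ` for `3 ≤ i ≤ n`. -/
def g1 (n : ℕ) (α : ℂ) : Bil n :=
  ofTable fun i j =>
    if i.val = 0 ∧ j.val = 1 then α • E n 1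
    else if i.val = 1 ∧ j.val = 0 then -(α • E n 1)
    else if i.val = 0 ∧ 2 ≤ j.val then E n j.val
    else if j.val = 0 ∧ 2 ≤ i.val then -E n i.val
    else 0

/-- `g_{n,2}`: `[e₁,e₂] = e₂ + e₃`, `[e₁,eᵢ] = eᵢ` for `3 ≤ i ≤ n`. -/
def g2 (n : ℕ) : Bil n :=
  ofTable fun i j =>
    if i.val = 0 ∧ j.val = 1 then E n 1 + E n 2
    else if i.val = 1 ∧ j.val = 0 then -(E n 1 + E n 2)
    else if i.val = 0 ∧ 2 ≤ j.val then E n j.val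
    else if j.val = 0 ∧ 2 ≤ i.val then -E n i.val
    else 0

lemma r2_apply (n : ℕ) (hn : 5 ≤ n) (x y : V n) :
    r2 n x y = (x ⟨0, by omega⟩ * y ⟨1, by omega⟩ - x ⟨1, by omega⟩ * y ⟨0, by omega⟩) • E n 1 := by
  have h01 : (⟨0, by omega⟩ : Fin n) ≠ ⟨1, by omega⟩ := by simp [Fin.ext_iff]
  have hc : ∀ i j : Fin n,
      (if i.val = 0 ∧ j.val = 1 then E n 1 else if i.val = 1 ∧ j.val = 0 then -E n 1 else 0)
      = (if j = (⟨1, by omega⟩ : Fin n) then (if i = (⟨0, by omega⟩ : Fin n) then E n 1 else 0) else 0)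
        + (if j = (⟨0, by omega⟩ : Fin n) then (if i = (⟨1, by omega⟩ : Fin n) then -E n 1 else 0) else 0) := by
    intro i j
    simp only [Fin.ext_iff]
    split_ifs <;> first | (simp_all) | (exfalso; omega)
  show (∑ i : Fin n, ∑ j : Fin n, (x i * y j) •
      (if i.val = 0 ∧ j.val = 1 then E n 1 else if i.val = 1 ∧ j.val = 0 then -E n 1 else 0)) = _
  simp only [hc, smul_add, smul_ite, smul_zero, Finset.sum_add_distrib,
    Finset.sum_ite_eq', Finset.mem_univ, if_true]
  module
lemma eq_sum_E (n : ℕ) (x : V n) : x = ∑ j : Fin n, x j • E n (j:ℕ) := by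
  funext m
  simp [E, Finset.sum_apply, Fin.val_eq_val]

lemma E_eq_single (n : ℕ) (j : Fin n) : E n (j:ℕ) = Pi.single j (1:ℂ) := by
  funext m
  simp [E, Pi.single_apply, Fin.val_eq_val]

def piMap (n : ℕ) (hn : 5 ≤ n) : Module.End ℂ (V n) →ₗ[ℂ]
    ((Fin n → ℂ) × ({j : Fin n // 2 ≤ j.val} → ℂ) × ({j : Fin n // 2 ≤ j.val} → ℂ)) where
  toFun D := (fun k => if (k : ℕ) = 1 then D (E n 0) ⟨0, by omega⟩ else D (E n 1) k,
              fun j => D (E n j.1) ⟨0, by omega⟩,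
              fun j => D (E n j.1) ⟨1, by omega⟩)
  map_add' D₁ D₂ := by
    refine Prod.ext ?_ (Prod.ext ?_ ?_) <;> funext k <;> simp <;> split <;> simp
  map_smul' c D := by
    refine Prod.ext ?_ (Prod.ext ?_ ?_) <;> funext k <;> simp <;> split <;> simp
lemma E_one_ne (n : ℕ) (hn : 5 ≤ n) : E n 1 ≠ 0 := by
  intro hE
  have := congrFun hE ⟨1, by omega⟩
  simp [E] at this

lemma der_forward (n : ℕ) (hn : 5 ≤ n) (D : Module.End ℂ (V n))
  (h : ∀ x y : V n, D (r2 n x y) = r2 n (D x) y + r2 n x (D y)) :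
    D (E n 0) ⟨0, by omega⟩ = 0 ∧ (∀ k : Fin n, (k:ℕ) ≠ 1 → D (E n 1) k = 0) ∧
    ∀ j : Fin n, 2 ≤ (j:ℕ) →
      D (E n (j:ℕ)) ⟨0, by omega⟩ = 0 ∧ D (E n (j:ℕ)) ⟨1, by omega⟩ = 0 := by
    have key01 := h (E n 0) (E n 1)
    simp only [r2_apply n hn, E, if_true, if_false] at key01
    norm_num at key01
    have e00 : D (E n 0) ⟨0, by omega⟩ = 0 := by
      have e1 := congrFun key01 ⟨1, by omega⟩
      simp [E] at e1
      linear_combination e1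
    refine ⟨e00, fun k hk1 => by simpa [E, hk1] using congrFun key01 k, ?_⟩
    intro j hj
    have hj0 : ¬((0:ℕ) = (j:ℕ)) := by omega
    have hj1 : ¬((1:ℕ) = (j:ℕ)) := by omega
    have keyA := h (E n 1) (E n (j:ℕ))
    have keyB := h (E n 0) (E n (j:ℕ))
    simp only [r2_apply n hn, E, hj0, hj1, if_true, if_false] at keyA keyB
    norm_num at keyA keyB
    exact ⟨keyA.resolve_right (E_one_ne n hn), by simpa [E] using (congrFun keyB ⟨1, by omega⟩).symm⟩
lemma der_backward (n : ℕ) (hn : 5 ≤ n) (D : Module.End ℂ (V n))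
    (e00 : D (E n 0) ⟨0, by omega⟩ = 0)
    (e1k : ∀ k : Fin n, (k:ℕ) ≠ 1 → D (E n 1) k = 0)
    (ej : ∀ j : Fin n, 2 ≤ (j:ℕ) →
      D (E n (j:ℕ)) ⟨0, by omega⟩ = 0 ∧ D (E n (j:ℕ)) ⟨1, by omega⟩ = 0) :
    ∀ x y : V n, D (r2 n x y) = r2 n (D x) y + r2 n x (D y) := by
  have h2n : (2:ℕ) ≤ n := by omega
  set z0 : Fin n := ⟨0, by omega⟩ with hz0
  set z1 : Fin n := ⟨1, by omega⟩ with hz1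
  set a : ℂ := D (E n 0) z1 with ha
  set b : ℂ := D (E n 1) z1 with hb
  have hDx : ∀ x : V n, D x = ∑ j : Fin n, x j • D (E n (j:ℕ)) := by
    intro x
    conv_lhs => rw [eq_sum_E n x]
    simp [map_sum]
  have hcase : ∀ j : Fin n, j ≠ z0 → j ≠ z1 → 2 ≤ (j:ℕ) := by
    intro j h0 h1
    have := j.isLt
    rcases Nat.lt_or_ge (j:ℕ) 2 with hlt | hge
    · interval_cases hv : (j:ℕ)
      · exact absurd (Fin.ext hv) h0
      · exact absurd (Fin.ext hv) h1
    · exact hge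
  have hE0 : E n 0 = E n ((z0:Fin n):ℕ) := rfl
  have hE1 : E n 1 = E n ((z1:Fin n):ℕ) := rfl
  have col0 : ∀ x : V n, D x z0 = 0 := by
    intro x
    rw [hDx x]
    rw [Finset.sum_apply]
    apply Finset.sum_eq_zero
    intro j _
    simp only [Pi.smul_apply, smul_eq_mul]
    rcases eq_or_ne j z0 with rfl | h0
    · rw [show D (E n ((z0:Fin n):ℕ)) z0 = 0 from e00, mul_zero]
    rcases eq_or_ne j z1 with rfl | h1
    · rw [show D (E n ((z1:Fin n):ℕ)) z0 = 0 from e1k z0 (by simp [hz0]), mul_zero]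
    · rw [(ej j (hcase j h0 h1)).1, mul_zero]
  have col1 : ∀ x : V n, D x z1 = x z0 * a + x z1 * b := by
    intro x
    rw [hDx x, Finset.sum_apply]
    have : ∀ j : Fin n, (x j • D (E n (j:ℕ))) z1
        = (if j = z0 then x j * a else 0) + (if j = z1 then x j * b else 0) := by
      intro j
      simp only [Pi.smul_apply, smul_eq_mul]
      rcases eq_or_ne j z0 with rfl | h0
      · rw [show D (E n ((z0:Fin n):ℕ)) z1 = a from rfl]
        simp [if_neg (show z0 ≠ z1 by simp [hz0, hz1, Fin.ext_iff])]
      rcases eq_or_ne j z1 with rfl | h1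
      · rw [show D (E n ((z1:Fin n):ℕ)) z1 = b from rfl]
        simp [if_neg h0]
      · simp [if_neg h0, if_neg h1, (ej j (hcase j h0 h1)).2]
    simp only [this, Finset.sum_add_distrib, Finset.sum_ite_eq', Finset.mem_univ, if_true]
  have hD1 : D (E n 1) = b • E n 1 := by
    funext k
    rcases eq_or_ne (k:ℕ) 1 with hk | hk
    · have : k = z1 := Fin.ext hk
      subst this
      simp [E, hb, hk]
    · simp [e1k k hk, E, hk]
  intro x y
  rw [r2_apply n hn x y, r2_apply n hn (D x) y, r2_apply n hn x (D y),
    map_smul, hD1, col0, col0, col1, col1, smul_smul, ← add_smul]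
  congr 1
  ring
lemma der_eq_ker (n : ℕ) (hn : 5 ≤ n) : Der (r2 n) = LinearMap.ker (piMap n hn) := by
  ext D
  have hmem : D ∈ Der (r2 n) ↔ ∀ x y : V n, D (r2 n x y) = r2 n (D x) y + r2 n x (D y) :=
    Iff.rfl
  rw [hmem, LinearMap.mem_ker]
  constructor
  · intro h
    obtain ⟨e00, e1k, ej⟩ := der_forward n hn D h
    refine Prod.ext (funext fun k => ?_) (Prod.ext (funext fun j => ?_) (funext fun j => ?_))
    · show (if (k:ℕ) = 1 then D (E n 0) ⟨0, by omega⟩ else D (E n 1) k) = 0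
      rcases eq_or_ne (k:ℕ) 1 with hk | hk
      · simp [hk, e00]
      · simp [hk, e1k k hk]
    · exact (ej j.1 j.2).1
    · exact (ej j.1 j.2).2
  · intro h
    have h1 := congrArg Prod.fst h
    have h2 := congrArg (fun t => t.2.1) h
    have h3 := congrArg (fun t => t.2.2) h
    simp only [piMap, LinearMap.coe_mk, AddHom.coe_mk] at h1 h2 h3
    refine der_backward n hn D ?_ ?_ ?_
    · have := congrFun h1 ⟨1, by omega⟩
      simpa using this
    · intro k hk
      have := congrFun h1 k
      simpa [hk] using this
    · intro j hj
      exact ⟨by simpa using congrFun h2 ⟨j, hj⟩, by simpa using congrFun h3 ⟨j, hj⟩⟩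

lemma piMap_surj (n : ℕ) (hn : 5 ≤ n) : Function.Surjective (piMap n hn) := by
  rintro ⟨f, g, h⟩
  classical
  set M : Matrix (Fin n) (Fin n) ℂ := fun k j =>
    if (j:ℕ) = 0 then (if (k:ℕ) = 0 then f ⟨1, by omega⟩ else 0)
    else if (j:ℕ) = 1 then (if (k:ℕ) = 1 then 0 else f k)
    else if hj : 2 ≤ (j:ℕ) then
      (if (k:ℕ) = 0 then g ⟨j, hj⟩ else if (k:ℕ) = 1 then h ⟨j, hj⟩ else 0)
    else 0 with hM
  refine ⟨Matrix.toLin' M, ?_⟩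
  have hDE : ∀ j : Fin n, Matrix.toLin' M (E n (j:ℕ)) = fun k => M k j := by
    intro j
    rw [E_eq_single, Matrix.toLin'_apply, Matrix.mulVec_single]
    simp
    rfl
  have hDE0 : Matrix.toLin' M (E n 0) = fun k => M k ⟨0, by omega⟩ := hDE ⟨0, by omega⟩
  have hDE1 : Matrix.toLin' M (E n 1) = fun k => M k ⟨1, by omega⟩ := hDE ⟨1, by omega⟩
  refine Prod.ext (funext fun k => ?_) (Prod.ext (funext fun j => ?_) (funext fun j => ?_))
  · show (if (k:ℕ) = 1 then Matrix.toLin' M (E n 0) ⟨0, by omega⟩ else Matrix.toLin' M (E n 1) k) = f k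
    rcases eq_or_ne (k:ℕ) 1 with hk | hk
    · have hk' : k = ⟨1, by omega⟩ := Fin.ext hk
      rw [if_pos hk, hDE0, hk']
      simp [hM]
    · rw [if_neg hk, hDE1]
      simp [hM, hk]
  · show Matrix.toLin' M (E n (j.1:ℕ)) ⟨0, by omega⟩ = g j
    rw [hDE j.1]
    have h0 : ¬((j.1:ℕ) = 0) := by have := j.2; omega
    have h1 : ¬((j.1:ℕ) = 1) := by have := j.2; omega
    simp [hM, h0, h1, j.2]
  · show Matrix.toLin' M (E n (j.1:ℕ)) ⟨1, by omega⟩ = h j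
    rw [hDE j.1]
    have h0 : ¬((j.1:ℕ) = 0) := by have := j.2; omega
    have h1 : ¬((j.1:ℕ) = 1) := by have := j.2; omega
    simp [hM, h0, h1, j.2]
def subEquiv (n : ℕ) : {j : Fin n // 2 ≤ j.val} ≃ Fin (n - 2) where
  toFun j := ⟨j.1.val - 2, by have := j.1.isLt; have := j.2; omega⟩
  invFun k := ⟨⟨k.val + 2, by have := k.isLt; omega⟩, Nat.le_add_left 2 k.val⟩
  left_inv j := by
    ext
    have := j.2
    simp
    omega
  right_inv k := by ext; simp

lemma finrank_der_r2 (n : ℕ) (hn : 5 ≤ n) :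
    Module.finrank ℂ (Der (r2 n)) = n ^ 2 - 3 * n + 4 := by
  have hcard : Fintype.card {j : Fin n // 2 ≤ j.val} = n - 2 := by
    rw [Fintype.card_congr (subEquiv n), Fintype.card_fin]
  have hrn := LinearMap.finrank_range_add_finrank_ker (piMap n hn)
  rw [LinearMap.range_eq_top.mpr (piMap_surj n hn), finrank_top] at hrn
  have htgt : Module.finrank ℂ
      ((Fin n → ℂ) × ({j : Fin n // 2 ≤ j.val} → ℂ) × ({j : Fin n // 2 ≤ j.val} → ℂ))
      = n + ((n - 2) + (n - 2)) := by
    simp [Module.finrank_prod, Module.finrank_pi, hcard]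
  have hend : Module.finrank ℂ (Module.End ℂ (V n)) = n * n := by
    rw [Module.finrank_linearMap, Module.finrank_fin_fun]
  rw [htgt, hend] at hrn
  rw [der_eq_ker n hn]
  obtain ⟨m, hm⟩ : ∃ m, n * n = m := ⟨_, rfl⟩
  rw [hm] at hrn
  rw [pow_two, hm]
  have hmn : 3 * n ≤ m := by
    rw [← hm]
    exact Nat.mul_le_mul_right n (by omega)
  have key : ∀ d : ℕ, n + (n - 2 + (n - 2)) + d = m → d = m - 3 * n + 4 := by
    intro d hd
    omega
  exact key _ hrn

/-- derivations and maximal abelian ideal of r2. -/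
theorem der_ab_r2 (n : ℕ) (hn : 5 ≤ n)  :
    Module.finrank ℂ (Der (r2 n)) = n ^ 2 - 3 * n + 4 ∧
    (∃ I : Submodule ℂ (V n), IsAbelianIdeal (r2 n) I ∧ Module.finrank ℂ I = n - 1) ∧
    (∀ I : Submodule ℂ (V n), IsAbelianIdeal (r2 n) I → Module.finrank ℂ I ≤ n - 1) := by
  have hn0 : (0:ℕ) < n := by omega
  have hn1 : (1:ℕ) < n := by omega
  refine ⟨finrank_der_r2 n hn, ?_, ?_⟩
  · set p : V n →ₗ[ℂ] ℂ := LinearMap.proj ⟨0, hn0⟩ with hp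
    refine ⟨LinearMap.ker p, ⟨?_, ?_⟩, ?_⟩
    · intro x v hv
      rw [LinearMap.mem_ker] at hv ⊢
      rw [r2_apply n hn]
      have : v ⟨0, by omega⟩ = 0 := hv
      simp [hp, E, this]
    · intro v hv w hw
      rw [LinearMap.mem_ker] at hv hw
      rw [r2_apply n hn]
      have hv0 : v ⟨0, by omega⟩ = 0 := hv
      have hw0 : w ⟨0, by omega⟩ = 0 := hw
      rw [hv0, hw0]
      simp
    · have hsurj : Function.Surjective p := fun c => ⟨fun _ => c, rfl⟩
      have hrn := LinearMap.finrank_range_add_finrank_ker p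
      rw [LinearMap.range_eq_top.mpr hsurj, finrank_top, Module.finrank_self,
        Module.finrank_fin_fun] at hrn
      omega
  · intro I hI
    by_contra hcon
    push_neg at hcon
    have hle : Module.finrank ℂ I ≤ n := by
      have := Submodule.finrank_le I
      rwa [Module.finrank_fin_fun] at this
    have heq : Module.finrank ℂ I = n := by omega
    have htop : I = ⊤ := Submodule.eq_top_of_finrank_eq (by rw [heq, Module.finrank_fin_fun])
    have hab := hI.2 (E n 0) (htop ▸ Submodule.mem_top) (E n 1) (htop ▸ Submodule.mem_top)
    rw [r2_apply n hn] at hab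
    simp [E] at hab
    exact E_one_ne n hn (by funext k; exact congrFun hab k)
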